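/- Let H be a transitive tournament with h vertices and let σ be any numbering of V(H). Then every ordered tournament (G,τ) whose underlying tournament G has domination number at least h·2^h contains the ordered tournament (H,σ). Consequently, for every transitive tournament H and every numbering σ of V(H), the ordered tournament (H,σ) is a legend. -/

import Mathlib

structure Tournament where
  V : Type
  fintype : Fintype V
  adj : V → V → Prop
  asymm : ∀ u v, adj u v → ¬ adj v u
  total : ∀ u v, u ≠ v → adj u v ∨ adj v u

attribute [instance] Tournament.fintype

namespace Tournament

/-- A set of vertices is transitive if it includes no cyclic triangle. -/
def IsTransitiveSet (T : Tournament) (A : Set T.V) : Prop :=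
  ∀ a ∈ A, ∀ b ∈ A, ∀ c ∈ A, T.adj a b → T.adj b c → ¬ T.adj c a

/-- The chromatic number of the subtournament induced on `A`. -/
noncomputable def chiOn (T : Tournament) (A : Set T.V) : ℕ :=
  sInf {k | ∃ C : Fin k → Set T.V, (∀ i, T.IsTransitiveSet (C i)) ∧ A ⊆ ⋃ i, C i}

noncomputable def chi (T : Tournament) : ℕ := T.chiOn Set.univ

def outN (T : Tournament) (v : T.V) : Set T.V := {u | T.adj v u}
def inN (T : Tournament) (v : T.V) : Set T.V := {u | T.adj u v}

/-- The domination number of the subtournament induced on `A`. -/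
noncomputable def domOn (T : Tournament) (A : Set T.V) : ℕ :=
  sInf {n | ∃ X : Finset T.V, ↑X ⊆ A ∧ (∀ v ∈ A, v ∉ X → ∃ x ∈ X, T.adj x v) ∧ X.card = n}

noncomputable def dom (T : Tournament) : ℕ := T.domOn Set.univ

/-- `A ⇒ B`: every edge between `A` and `B` is directed from `A` to `B`. -/
def CompleteTo (T : Tournament) (A B : Set T.V) : Prop :=
  ∀ a ∈ A, ∀ b ∈ B, T.adj a b

def CompletePair (T : Tournament) (A B : Set T.V) : Prop :=
  Disjoint A B ∧ T.CompleteTo A B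

/-- `G` has a subtournament inside `A` isomorphic to `H`. -/
def ContainsOn (G : Tournament) (A : Set G.V) (H : Tournament) : Prop :=
  ∃ f : H.V → G.V, Function.Injective f ∧ (∀ u, f u ∈ A) ∧
    ∀ u v, H.adj u v ↔ G.adj (f u) (f v)

def Contains (G H : Tournament) : Prop := G.ContainsOn Set.univ H

def IsHero (H : Tournament) : Prop :=
  ∃ c > 0, ∀ G : Tournament, ¬ G.Contains H → G.chi < c

def IsRebel (H : Tournament) : Prop :=
  ∃ c > 0, ∀ G : Tournament, ¬ G.Contains H → G.dom < c

/-- The ordered tournament `(G,τ)` contains the ordered tournament `(H,σ)`. -/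
def OrderedContains (G : Tournament) {n : ℕ} (τ : Fin n ≃ G.V)
    (H : Tournament) {h : ℕ} (σ : Fin h ≃ H.V) : Prop :=
  ∃ g : Fin h → Fin n, StrictMono g ∧
    ∀ i j, H.adj (σ i) (σ j) ↔ G.adj (τ (g i)) (τ (g j))

/-- `(H,σ)` is a legend: some `k` is such that every ordered tournament with
domination number at least `k` contains `(H,σ)`. -/
def IsLegend (H : Tournament) {h : ℕ} (σ : Fin h ≃ H.V) : Prop :=
  ∃ k : ℕ, ∀ (G : Tournament) (τ : Fin (Fintype.card G.V) ≃ G.V),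
    k ≤ G.dom → OrderedContains G τ H σ


noncomputable def eDom (T : Tournament) (A : Set T.V) : ℕ :=
  sInf {n | ∃ X : Finset T.V, (∀ v ∈ A, v ∉ X → ∃ x ∈ X, T.adj x v) ∧ X.card = n}

variable (T : Tournament)

lemma eDom_le {A : Set T.V} (X : Finset T.V)
    (hX : ∀ v ∈ A, v ∉ X → ∃ x ∈ X, T.adj x v) : T.eDom A ≤ X.card :=
  Nat.sInf_le ⟨X, hX, rfl⟩

lemma eDom_exists (A : Set T.V) :
    ∃ X : Finset T.V, (∀ v ∈ A, v ∉ X → ∃ x ∈ X, T.adj x v) ∧ X.card = T.eDom A := by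
  have hne : {n | ∃ X : Finset T.V, (∀ v ∈ A, v ∉ X → ∃ x ∈ X, T.adj x v) ∧ X.card = n}.Nonempty :=
    ⟨(Finset.univ : Finset T.V).card, Finset.univ, fun v _ hv => absurd (Finset.mem_univ v) hv, rfl⟩
  exact Nat.sInf_mem hne

lemma eDom_mono {A B : Set T.V} (h : A ⊆ B) : T.eDom A ≤ T.eDom B := by
  obtain ⟨X, hX, hcard⟩ := T.eDom_exists B
  calc T.eDom A ≤ X.card := T.eDom_le X (fun v hv => hX v (h hv))
    _ = T.eDom B := hcard

lemma eDom_union (A B : Set T.V) : T.eDom (A ∪ B) ≤ T.eDom A + T.eDom B := by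
  letI := Classical.decEq T.V
  obtain ⟨X, hX, hXc⟩ := T.eDom_exists A
  obtain ⟨Y, hY, hYc⟩ := T.eDom_exists B
  calc T.eDom (A ∪ B) ≤ (X ∪ Y).card := by
        refine T.eDom_le (X ∪ Y) (fun v hv hvn => ?_)
        rcases hv with hv | hv
        · obtain ⟨x, hx, hadj⟩ := hX v hv (fun hvX => hvn (Finset.mem_union_left _ hvX))
          exact ⟨x, Finset.mem_union_left _ hx, hadj⟩
        · obtain ⟨x, hx, hadj⟩ := hY v hv (fun hvX => hvn (Finset.mem_union_right _ hvX))
          exact ⟨x, Finset.mem_union_right _ hx, hadj⟩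
    _ ≤ X.card + Y.card := Finset.card_union_le X Y
    _ = T.eDom A + T.eDom B := by rw [hXc, hYc]

lemma eDom_subsingleton {A : Set T.V} (h : ∀ x ∈ A, ∀ y ∈ A, x = y) : T.eDom A ≤ 1 := by
  rcases Set.eq_empty_or_nonempty A with rfl | ⟨x, hx⟩
  · have : T.eDom ∅ ≤ (∅ : Finset T.V).card := T.eDom_le ∅ (fun v hv => absurd hv (by simp))
    simpa using this.trans (by simp)
  · have := T.eDom_le {x} (A := A) (fun v hv hvn => by
      exact absurd (by simpa using h v hv x hx) hvn)
    simpa using this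

lemma nonempty_of_eDom {A : Set T.V} (h : 1 ≤ T.eDom A) : ∃ v, v ∈ A := by
  by_contra hc
  push_neg at hc
  have : T.eDom A ≤ (∅ : Finset T.V).card :=
    T.eDom_le ∅ (fun v hv => absurd hv (hc v))
  simp at this; omega

lemma eDom_inter_inN (A : Set T.V) (v : T.V) :
    T.eDom A ≤ T.eDom (A ∩ T.inN v) + 1 := by
  letI := Classical.decEq T.V
  obtain ⟨X, hX, hXc⟩ := T.eDom_exists (A ∩ T.inN v)
  have := T.eDom_le (insert v X) (A := A) (fun u hu hun => by
    by_cases hin : u ∈ T.inN v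
    · obtain ⟨x, hx, hadj⟩ := hX u ⟨hu, hin⟩ (fun hx => hun (Finset.mem_insert_of_mem hx))
      exact ⟨x, Finset.mem_insert_of_mem hx, hadj⟩
    · have huv : u ≠ v := fun h => hun (h ▸ Finset.mem_insert_self v X)
      rcases T.total u v huv with h | h
      · exact absurd h hin
      · exact ⟨v, Finset.mem_insert_self v X, h⟩)
  calc T.eDom A ≤ (insert v X).card := this
    _ ≤ X.card + 1 := Finset.card_insert_le v X
    _ = T.eDom (A ∩ T.inN v) + 1 := by rw [hXc]

lemma dom_eq_eDom_univ : T.dom = T.eDom Set.univ := by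
  unfold dom domOn eDom
  congr 1
  ext n
  constructor
  · rintro ⟨X, _, hX, hc⟩; exact ⟨X, hX, hc⟩
  · rintro ⟨X, hX, hc⟩; exact ⟨X, by simp, hX, hc⟩

/-- Greedy chain selection: from `k` candidate sets each of external domination
number at least `k`, pick one vertex from each so that later picks beat earlier picks. -/
lemma chain (G : Tournament) : ∀ (k : ℕ) (C : Fin k → Set G.V),
    (∀ j, k ≤ G.eDom (C j)) →
    ∃ w : Fin k → G.V, (∀ j, w j ∈ C j) ∧ ∀ a b : Fin k, a < b → G.adj (w b) (w a) := by
  intro k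
  induction k with
  | zero => intro C _; exact ⟨Fin.elim0, fun j => j.elim0, fun a => a.elim0⟩
  | succ k ih =>
    intro C hC
    obtain ⟨v, hv⟩ := G.nonempty_of_eDom (le_trans (by omega) (hC 0))
    have hC'dom : ∀ j : Fin k, k ≤ G.eDom (C j.succ ∩ G.inN v) := by
      intro j
      have h1 := G.eDom_inter_inN (C j.succ) v
      have h2 := hC j.succ
      omega
    set C' : Fin k → Set G.V := fun j => C j.succ ∩ G.inN v with hC'
    obtain ⟨w', hw'mem, hw'adj⟩ := ih C' hC'dom
    refine ⟨Fin.cases v w', ?_, ?_⟩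
    · intro j
      induction j using Fin.cases with
      | zero => simpa using hv
      | succ j => simpa using (hw'mem j).1
    · intro a b hab
      induction b using Fin.cases with
      | zero => exact absurd hab (by simp)
      | succ b =>
        induction a using Fin.cases with
        | zero =>
          have : w' b ∈ G.inN v := (hw'mem b).2
          simpa [Tournament.inN] using this
        | succ a =>
          have hab' : a < b := by
            simpa [Fin.succ_lt_succ_iff] using hab
          simpa using hw'adj a b hab'

/-- The set of vertices whose position is in `[a, b)`. -/
def Blk (G : Tournament) {N : ℕ} (τ : Fin N ≃ G.V) (a b : ℕ) : Set G.V :=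
  {v | a ≤ (τ.symm v : ℕ) ∧ (τ.symm v : ℕ) < b}

lemma Blk_subset_union (G : Tournament) {N : ℕ} (τ : Fin N ≃ G.V) (a b c : ℕ) :
    Blk G τ a b ⊆ Blk G τ a c ∪ Blk G τ c b := by
  intro v ⟨h1, h2⟩
  by_cases hc : (τ.symm v : ℕ) < c
  · exact Or.inl ⟨h1, hc⟩
  · exact Or.inr ⟨by omega, h2⟩

lemma eDom_Blk_succ (G : Tournament) {N : ℕ} (τ : Fin N ≃ G.V) (a b : ℕ) :
    G.eDom (Blk G τ a (b + 1)) ≤ G.eDom (Blk G τ a b) + 1 := by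
  have h1 : G.eDom (Blk G τ a (b+1)) ≤ G.eDom (Blk G τ a b) + G.eDom (Blk G τ b (b+1)) :=
    le_trans (G.eDom_mono (Blk_subset_union G τ a (b+1) b)) (G.eDom_union _ _)
  have h2 : G.eDom (Blk G τ b (b+1)) ≤ 1 := by
    refine G.eDom_subsingleton (fun x hx y hy => ?_)
    obtain ⟨hx1, hx2⟩ := hx
    obtain ⟨hy1, hy2⟩ := hy
    have : τ.symm x = τ.symm y := Fin.ext (by omega)
    exact τ.symm.injective this
  omega

lemma Blk_univ (G : Tournament) {N : ℕ} (τ : Fin N ≃ G.V) :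
    Blk G τ 0 N = Set.univ := by
  ext v
  simp [Blk, (τ.symm v).isLt]

/-- Greedy splitting of the vertex ordering into `m` consecutive blocks each with
external domination number at least `q`. -/
lemma split (G : Tournament) {N : ℕ} (τ : Fin N ≃ G.V) (q : ℕ) (hq : 1 ≤ q) :
    ∀ (m a : ℕ), m * q ≤ G.eDom (Blk G τ a N) →
    ∃ s : ℕ → ℕ, Monotone s ∧ s 0 = a ∧
      ∀ j < m, q ≤ G.eDom (Blk G τ (s j) (s (j + 1))) := by
  intro m
  induction m with
  | zero => exact fun a _ => ⟨fun _ => a, monotone_const, rfl, by omega⟩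
  | succ m ih =>
    intro a hd
    classical
    have hPN : q ≤ G.eDom (Blk G τ a N) := le_trans (by nlinarith) hd
    have hEx : ∃ cc : ℕ, q ≤ G.eDom (Blk G τ a cc) := ⟨N, hPN⟩
    set c := Nat.find hEx with hcdef
    have hc : q ≤ G.eDom (Blk G τ a c) := Nat.find_spec hEx
    have hupper : G.eDom (Blk G τ a c) ≤ q := by
      rcases Nat.eq_zero_or_pos c with hc0 | hcpos
      · exfalso
        have hemp : Blk G τ a 0 = ∅ := by
          ext v; simp [Blk]
        rw [hc0, hemp] at hc
        have : G.eDom (∅ : Set G.V) ≤ (∅ : Finset G.V).card :=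
          G.eDom_le ∅ (fun v hv => absurd hv (by simp))
        simp at this
        omega
      · obtain ⟨c', hcc⟩ : ∃ c', c = c' + 1 := ⟨c - 1, by omega⟩
        have hmin : ¬ q ≤ G.eDom (Blk G τ a c') := Nat.find_min hEx (by omega)
        have := eDom_Blk_succ G τ a c'
        rw [hcc]
        omega
    have hsub : G.eDom (Blk G τ a N) ≤ G.eDom (Blk G τ a c) + G.eDom (Blk G τ c N) :=
      le_trans (G.eDom_mono (Blk_subset_union G τ a N c)) (G.eDom_union _ _)
    have hrest : m * q ≤ G.eDom (Blk G τ c N) := by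
      have : (m + 1) * q = m * q + q := by ring
      omega
    have hac : a ≤ c := by
      obtain ⟨v, hv⟩ := G.nonempty_of_eDom (le_trans hq hc)
      obtain ⟨hv1, hv2⟩ := hv
      omega
    obtain ⟨s', hs'mono, hs'0, hs'blk⟩ := ih c hrest
    refine ⟨fun t => match t with | 0 => a | (t + 1) => s' t, ?_, rfl, ?_⟩
    · apply monotone_nat_of_le_succ
      intro t
      match t with
      | 0 => simpa [hs'0] using hac
      | (t + 1) => exact hs'mono (Nat.le_succ t)
    · intro j hj
      match j with
      | 0 => simpa [hs'0] using hc
      | (j + 1) => exact hs'blk j (by omega)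

end Tournament

open Tournament in
/-- Every ordered tournament with domination number at least `h·2^h` contains any
given ordered transitive tournament on `h` vertices; consequently every ordered
transitive tournament is a legend. -/
theorem transitive_is_legend (H : Tournament) (hH : H.IsTransitiveSet Set.univ)
    (σ : Fin (Fintype.card H.V) ≃ H.V) :
    (∀ (G : Tournament) (τ : Fin (Fintype.card G.V) ≃ G.V),
        Fintype.card H.V * 2 ^ Fintype.card H.V ≤ G.dom →
        OrderedContains G τ H σ) ∧
      IsLegend H σ := by
  have key : ∀ (G : Tournament) (τ : Fin (Fintype.card G.V) ≃ G.V),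
      Fintype.card H.V * 2 ^ Fintype.card H.V ≤ G.dom →
      OrderedContains G τ H σ := by
    intro G τ hdom
    by_cases hh0 : Fintype.card H.V = 0
    · exact ⟨fun i => (Fin.cast hh0 i).elim0,
        fun i => (Fin.cast hh0 i).elim0, fun i => (Fin.cast hh0 i).elim0⟩
    have hh1 : 1 ≤ Fintype.card H.V := by omega
    -- a linear order on `H.V` (reversed so that larger elements beat smaller ones)
    haveI htri : IsTrichotomous H.V (fun x y => H.adj y x) := ⟨fun a b => by
      rcases eq_or_ne a b with rfl | hab
      · exact fun _ _ => rfl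
      · rcases H.total a b hab with hab' | hab'
        · exact fun _ h => absurd hab' h
        · exact fun h _ => absurd hab' h⟩
    haveI hirr : IsIrrefl H.V (fun x y => H.adj y x) := ⟨fun a ha => H.asymm a a ha ha⟩
    haveI htrans : IsTrans H.V (fun x y => H.adj y x) := ⟨fun a b c hba hcb => by
      by_contra hca
      have hac : a ≠ c := by
        rintro rfl
        exact H.asymm _ _ hba hcb
      have h1 : ¬ H.adj a c :=
        hH c (Set.mem_univ c) b (Set.mem_univ b) a (Set.mem_univ a) hcb hba
      rcases H.total a c hac with h2 | h2
      · exact h1 h2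
      · exact hca h2⟩
    haveI hSO : IsStrictOrder H.V (fun x y => H.adj y x) := {}
    haveI hSTO : IsStrictTotalOrder H.V (fun x y => H.adj y x) := {}
    letI : DecidableRel (fun x y : H.V => H.adj y x) := Classical.decRel _
    letI : LinearOrder H.V := linearOrderOfSTO (fun x y => H.adj y x)
    let e : Fin (Fintype.card H.V) ≃o H.V := monoEquivOfFin H.V rfl
    have he : ∀ a b : Fin (Fintype.card H.V), a < b → H.adj (e b) (e a) := by
      intro a b hab
      exact e.strictMono hab
    let π : Fin (Fintype.card H.V) ≃ Fin (Fintype.card H.V) := e.toEquiv.trans σ.symm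
    have hπ : ∀ a : Fin (Fintype.card H.V), σ (π a) = e a := by
      intro a
      simp [π]
    -- split the ordering into `h` blocks with external domination number at least `h`
    have hud : G.eDom (Blk G τ 0 (Fintype.card G.V)) = G.dom := by
      rw [Blk_univ, dom_eq_eDom_univ]
    have hhd : Fintype.card H.V * Fintype.card H.V ≤ G.eDom (Blk G τ 0 (Fintype.card G.V)) := by
      rw [hud]
      calc Fintype.card H.V * Fintype.card H.V ≤ Fintype.card H.V * 2 ^ Fintype.card H.V :=
            Nat.mul_le_mul_left _ (Nat.le_of_lt (Nat.lt_two_pow_self))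
        _ ≤ G.dom := hdom
    obtain ⟨s, hsmono, hs0, hsblk⟩ := split G τ (Fintype.card H.V) hh1 (Fintype.card H.V) 0 hhd
    -- greedily pick a vertex in each block, in increasing order of rank
    set C : Fin (Fintype.card H.V) → Set G.V :=
      fun a => Blk G τ (s (π a : ℕ)) (s ((π a : ℕ) + 1)) with hC
    have hCdom : ∀ a, Fintype.card H.V ≤ G.eDom (C a) := fun a => hsblk (π a : ℕ) (π a).isLt
    obtain ⟨w, hwmem, hwadj⟩ := chain G (Fintype.card H.V) C hCdom
    -- the embedding
    refine ⟨fun j => τ.symm (w (π.symm j)), ?_, ?_⟩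
    · have hpos : ∀ j : Fin (Fintype.card H.V), s (j : ℕ) ≤ (τ.symm (w (π.symm j)) : ℕ) ∧
          (τ.symm (w (π.symm j)) : ℕ) < s ((j : ℕ) + 1) := by
        intro j
        have hm := hwmem (π.symm j)
        rw [hC] at hm
        simpa [Blk, Equiv.apply_symm_apply] using hm
      intro j j' hlt
      have h1 := hpos j
      have h2 := hpos j'
      have hle : s ((j : ℕ) + 1) ≤ s (j' : ℕ) := hsmono (by exact hlt)
      show τ.symm (w (π.symm j)) < τ.symm (w (π.symm j'))
      rw [Fin.lt_def]
      omega
    · intro i j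
      show H.adj (σ i) (σ j) ↔ G.adj (τ (τ.symm (w (π.symm i)))) (τ (τ.symm (w (π.symm j))))
      have hgi : τ (τ.symm (w (π.symm i))) = w (π.symm i) := τ.apply_symm_apply _
      have hgj : τ (τ.symm (w (π.symm j))) = w (π.symm j) := τ.apply_symm_apply _
      rw [hgi, hgj]
      have hσi : σ i = e (π.symm i) := by
        conv_lhs => rw [← Equiv.apply_symm_apply π i]
        exact hπ (π.symm i)
      have hσj : σ j = e (π.symm j) := by
        conv_lhs => rw [← Equiv.apply_symm_apply π j]
        exact hπ (π.symm j)
      rw [hσi, hσj]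
      set a := π.symm i
      set b := π.symm j
      rcases lt_trichotomy a b with hab | hab | hab
      · exact iff_of_false (H.asymm _ _ (he a b hab)) (G.asymm _ _ (hwadj a b hab))
      · rw [hab]
        exact iff_of_false (fun hx => H.asymm _ _ hx hx) (fun hx => G.asymm _ _ hx hx)
      · exact iff_of_true (he b a hab) (hwadj b a hab)
  exact ⟨key, ⟨Fintype.card H.V * 2 ^ Fintype.card H.V, key⟩⟩
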